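/- arXiv:1412.7351 — 2 statements merged into one kernel-verified Lean document; each statement's English description precedes it below -/
import Mathlib

section
/- Let E be a real Banach space and β the De Blasi measure of weak noncompactness. Suppose E₁ and E₂ are bounded nonempty subsets of E with sup{‖x‖ : x ∈ E₁} < 1. Then β(E₁ + E₂) ≤ β(E₂) + ‖E₁‖·β(K(E₂,1)), where ‖E₁‖ = sup{‖x‖ : x ∈ E₁} and K(E₂,1) = {x ∈ E : dist(x, E₂) ≤ 1}. -/
open Metric Set Pointwise

/-- Weakly compact subset of a normed space: compact in the weak topology. -/
def IsWeaklyCompact {E : Type*} [NormedAddCommGroup E] [NormedSpace ℝ E] (C : Set E) : Prop :=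
  IsCompact (toWeakSpace ℝ E '' C)

/-- De Blasi measure of weak noncompactness. -/
noncomputable def deBlasi {E : Type*} [NormedAddCommGroup E] [NormedSpace ℝ E]
    (A : Set E) : ℝ :=
  sInf {t : ℝ | 0 < t ∧ ∃ C : Set E, IsWeaklyCompact C ∧
    A ⊆ C + t • Metric.closedBall (0 : E) 1}

lemma deBlasi_set_nonempty {E : Type*} [NormedAddCommGroup E] [NormedSpace ℝ E]
    {A : Set E} (hA : Bornology.IsBounded A) :
    {t : ℝ | 0 < t ∧ ∃ C : Set E, IsWeaklyCompact C ∧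
      A ⊆ C + t • Metric.closedBall (0 : E) 1}.Nonempty := by
  obtain ⟨R, hR⟩ := (isBounded_iff_forall_norm_le).mp hA
  refine ⟨max R 1, lt_of_lt_of_le one_pos (le_max_right _ _), {0}, ?_, ?_⟩
  · unfold IsWeaklyCompact
    rw [Set.image_singleton]
    exact isCompact_singleton
  · intro x hx
    refine ⟨0, rfl, x, ?_, by simp⟩
    rw [_root_.smul_closedBall _ _ zero_le_one]
    simp only [smul_zero, mem_closedBall, dist_zero_right]
    calc ‖x‖ ≤ R := hR x hx
      _ ≤ max R 1 := le_max_left _ _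
      _ = ‖max R 1‖ * 1 := by
        rw [mul_one, Real.norm_eq_abs, abs_of_pos (lt_of_lt_of_le one_pos (le_max_right _ _))]

lemma deBlasi_nonneg {E : Type*} [NormedAddCommGroup E] [NormedSpace ℝ E] (A : Set E) :
    0 ≤ deBlasi A :=
  Real.sInf_nonneg fun _ ht => ht.1.le

theorem deBlasi_add_small {E : Type*} [NormedAddCommGroup E] [NormedSpace ℝ E]
    [CompleteSpace E] (E₁ E₂ : Set E)
    (h1 : E₁.Nonempty) (h1b : Bornology.IsBounded E₁)
    (h2 : E₂.Nonempty) (h2b : Bornology.IsBounded E₂)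
    (hsmall : sSup ((fun x => ‖x‖) '' E₁) < 1) :
    deBlasi (E₁ + E₂) ≤
      deBlasi E₂ + sSup ((fun x => ‖x‖) '' E₁) *
        deBlasi {x : E | Metric.infDist x E₂ ≤ 1} := by
  set r := sSup ((fun x => ‖x‖) '' E₁) with hr_def
  obtain ⟨R₁, hR₁⟩ := (isBounded_iff_forall_norm_le).mp h1b
  have hbdd : BddAbove ((fun x => ‖x‖) '' E₁) := by
    refine ⟨R₁, ?_⟩
    rintro _ ⟨x, hx, rfl⟩
    exact hR₁ x hx
  have hxr : ∀ x ∈ E₁, ‖x‖ ≤ r := fun x hx => le_csSup hbdd ⟨x, hx, rfl⟩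
  have hr0 : 0 ≤ r := by
    obtain ⟨x, hx⟩ := h1
    exact le_trans (norm_nonneg x) (hxr x hx)
  set K : Set E := {x : E | Metric.infDist x E₂ ≤ 1} with hK_def
  have hKb : Bornology.IsBounded K := by
    obtain ⟨R₂, hR₂⟩ := (isBounded_iff_forall_norm_le).mp h2b
    rw [isBounded_iff_forall_norm_le]
    refine ⟨R₂ + 2, fun x hx => ?_⟩
    have : Metric.infDist x E₂ < 2 := lt_of_le_of_lt hx one_lt_two
    obtain ⟨y, hy, hxy⟩ := (Metric.infDist_lt_iff h2).mp this
    calc ‖x‖ = ‖y + (x - y)‖ := by rw [show y + (x - y) = x by abel]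
      _ ≤ ‖y‖ + ‖x - y‖ := norm_add_le _ _
      _ ≤ R₂ + 2 := add_le_add (hR₂ y hy) (by rw [← dist_eq_norm]; exact hxy.le)
  rcases eq_or_lt_of_le hr0 with hr | hr
  · -- r = 0, so E₁ = {0}
    have hE1 : E₁ = {0} := by
      apply Set.eq_singleton_iff_nonempty_unique_mem.mpr
      refine ⟨h1, fun x hx => ?_⟩
      have := hxr x hx
      rw [← hr] at this
      exact norm_le_zero_iff.mp this
    have : E₁ + E₂ = E₂ := by
      rw [hE1]
      ext z
      simp [Set.mem_add, eq_comm]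
    rw [this, ← hr, zero_mul, add_zero]
  · -- r > 0
    have hrlt : r < 1 := hsmall
    have hne2 := deBlasi_set_nonempty (E := E) h2b
    have hneK := deBlasi_set_nonempty (E := E) hKb
    have hbelow : ∀ (A : Set E), BddBelow {t : ℝ | 0 < t ∧ ∃ C : Set E, IsWeaklyCompact C ∧
        A ⊆ C + t • Metric.closedBall (0 : E) 1} :=
      fun A => ⟨0, fun t ht => ht.1.le⟩
    set X := deBlasi (E₁ + E₂) with hX_def
    have key : ∀ t ∈ {t : ℝ | 0 < t ∧ ∃ C : Set E, IsWeaklyCompact C ∧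
        E₂ ⊆ C + t • Metric.closedBall (0 : E) 1},
        ∀ s ∈ {t : ℝ | 0 < t ∧ ∃ C : Set E, IsWeaklyCompact C ∧
        K ⊆ C + t • Metric.closedBall (0 : E) 1},
        X ≤ (1 - r) * t + r * s := by
      rintro t ⟨ht, C, hC, hCsub⟩ s ⟨hs, D, hD, hDsub⟩
      apply csInf_le (hbelow _)
      have hu : 0 < (1 - r) * t + r * s := by nlinarith
      refine ⟨hu, (1 - r) • C + r • D, ?_, ?_⟩
      · unfold IsWeaklyCompact
        have himg : toWeakSpace ℝ E '' ((1 - r) • C + r • D) =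
            (1 - r) • (toWeakSpace ℝ E '' C) + r • (toWeakSpace ℝ E '' D) := by
          rw [Set.image_add, image_smul_set, image_smul_set]
        rw [himg]
        haveI : ContinuousSMul ℝ (WeakSpace ℝ E) :=
          WeakBilin.instContinuousSMul (topDualPairing ℝ E).flip
        exact ((hC.smul (1 - r)).add (hD.smul r))
      · rintro z ⟨x, hx, y, hy, rfl⟩
        obtain ⟨c, hc, w, hw, hcw⟩ := hCsub hy
        have hwn : ‖w‖ ≤ t := by
          rw [_root_.smul_closedBall _ _ zero_le_one] at hw
          simpa [abs_of_pos ht] using hw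
        have hzK : y + r⁻¹ • x ∈ K := by
          have h1' : Metric.infDist (y + r⁻¹ • x) E₂ ≤ dist (y + r⁻¹ • x) y :=
            Metric.infDist_le_dist_of_mem hy
          have h2' : dist (y + r⁻¹ • x) y = r⁻¹ * ‖x‖ := by
            rw [dist_eq_norm, add_sub_cancel_left, norm_smul, Real.norm_eq_abs,
              abs_of_pos (inv_pos.mpr hr)]
          rw [hK_def, Set.mem_setOf_eq]
          calc Metric.infDist (y + r⁻¹ • x) E₂ ≤ r⁻¹ * ‖x‖ := by rw [← h2']; exact h1'
            _ ≤ r⁻¹ * r := by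
              apply mul_le_mul_of_nonneg_left (hxr x hx) (inv_pos.mpr hr).le
            _ = 1 := inv_mul_cancel₀ hr.ne'
        obtain ⟨d, hd, v, hv, hdv⟩ := hDsub hzK
        have hvn : ‖v‖ ≤ s := by
          rw [_root_.smul_closedBall _ _ zero_le_one] at hv
          simpa [abs_of_pos hs] using hv
        refine ⟨(1 - r) • c + r • d,
          Set.add_mem_add (Set.smul_mem_smul_set hc) (Set.smul_mem_smul_set hd),
          (1 - r) • w + r • v, ?_, ?_⟩
        · rw [_root_.smul_closedBall _ _ zero_le_one]
          simp only [smul_zero, mem_closedBall, dist_zero_right]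
          rw [Real.norm_eq_abs, abs_of_pos hu, mul_one]
          calc ‖(1 - r) • w + r • v‖ ≤ ‖(1 - r) • w‖ + ‖r • v‖ := norm_add_le _ _
            _ = (1 - r) * ‖w‖ + r * ‖v‖ := by
              rw [norm_smul, norm_smul, Real.norm_eq_abs, Real.norm_eq_abs,
                abs_of_pos (by linarith), abs_of_pos hr]
            _ ≤ (1 - r) * t + r * s := by
              apply add_le_add
              · exact mul_le_mul_of_nonneg_left hwn (by linarith)
              · exact mul_le_mul_of_nonneg_left hvn hr.le
        · have hcw' : c + w = y := hcw
          have hdv' : d + v = y + r⁻¹ • x := hdv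
          have h3 : r • (r⁻¹ • x) = x := by
            rw [smul_smul, mul_inv_cancel₀ hr.ne', one_smul]
          show (1 - r) • c + r • d + ((1 - r) • w + r • v) = x + y
          have e1 : (1 - r) • c + r • d + ((1 - r) • w + r • v) =
              (1 - r) • (c + w) + r • (d + v) := by module
          rw [e1, hcw', hdv', smul_add, h3]
          module
    -- now take infima
    have step1 : ∀ t ∈ {t : ℝ | 0 < t ∧ ∃ C : Set E, IsWeaklyCompact C ∧
        E₂ ⊆ C + t • Metric.closedBall (0 : E) 1},
        X ≤ (1 - r) * t + r * deBlasi K := by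
      intro t ht
      have hdiv : (X - (1 - r) * t) / r ≤ deBlasi K := by
        apply le_csInf hneK
        intro s hsmem
        rw [div_le_iff₀ hr]
        have := key t ht s hsmem
        nlinarith
      rw [div_le_iff₀ hr] at hdiv
      nlinarith
    have step2 : X ≤ (1 - r) * deBlasi E₂ + r * deBlasi K := by
      have h1r : (0:ℝ) < 1 - r := by linarith
      have hdiv : (X - r * deBlasi K) / (1 - r) ≤ deBlasi E₂ := by
        apply le_csInf hne2
        intro t htmem
        rw [div_le_iff₀ h1r]
        have := step1 t htmem
        nlinarith
      rw [div_le_iff₀ h1r] at hdiv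
      nlinarith
    have ha : 0 ≤ deBlasi E₂ := deBlasi_nonneg E₂
    nlinarith
end

section
/- Let E be a real Banach space, T₁ = [0,a], T₂ = [0,b], and let f : T₁ × T₂ × E → E be continuous. If z : T₁ × T₂ → E is continuous and satisfies z(x,y) = ∫₀ˣ ∫₀ʸ f(s,t,z(s,t)) dt ds for all (x,y), then z(x,0) = 0 for all x ∈ T₁, z(0,y) = 0 for all y ∈ T₂, the mixed partial derivative ∂²z/∂x∂y exists everywhere on (0,a) × (0,b), and ∂²z/∂x∂y (x,y) = f(x,y,z(x,y)). -/
open Set intervalIntegral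

/-- Converse direction: a continuous solution of the integral equation
solves the Goursat problem `z_{xy} = f(x,y,z)`, `z(x,0)=z(0,y)=0`. -/
theorem integral_to_goursat {E : Type*} [NormedAddCommGroup E] [NormedSpace ℝ E]
    [CompleteSpace E] (a b : ℝ) (ha : 0 < a) (hb : 0 < b)
    (f : ℝ → ℝ → E → E)
    (hf : ContinuousOn (fun p : ℝ × ℝ × E => f p.1 p.2.1 p.2.2)
      (Set.Icc 0 a ×ˢ Set.Icc 0 b ×ˢ Set.univ))
    (z : ℝ → ℝ → E)
    (hz : ContinuousOn (fun p : ℝ × ℝ => z p.1 p.2) (Set.Icc 0 a ×ˢ Set.Icc 0 b))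
    (hint : ∀ x ∈ Set.Icc (0:ℝ) a, ∀ y ∈ Set.Icc (0:ℝ) b,
      z x y = ∫ s in (0:ℝ)..x, ∫ t in (0:ℝ)..y, f s t (z s t)) :
    (∀ x ∈ Set.Icc (0:ℝ) a, z x 0 = 0) ∧
    (∀ y ∈ Set.Icc (0:ℝ) b, z 0 y = 0) ∧
    ∃ zx : ℝ → ℝ → E,
      (∀ x ∈ Set.Ioo (0:ℝ) a, ∀ y ∈ Set.Ioo (0:ℝ) b,
        HasDerivAt (fun x' => z x' y) (zx x y) x) ∧
      (∀ x ∈ Set.Ioo (0:ℝ) a, ∀ y ∈ Set.Ioo (0:ℝ) b,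
        HasDerivAt (fun y' => zx x y') (f x y (z x y)) y) := by
  -- clamping maps
  set πa : ℝ → ℝ := fun s => min (max s 0) a with hπa
  set πb : ℝ → ℝ := fun t => min (max t 0) b with hπb
  have hπa_mem : ∀ s, πa s ∈ Set.Icc (0:ℝ) a := fun s =>
    ⟨le_min (le_max_right _ _) ha.le, min_le_right _ _⟩
  have hπb_mem : ∀ t, πb t ∈ Set.Icc (0:ℝ) b := fun t =>
    ⟨le_min (le_max_right _ _) hb.le, min_le_right _ _⟩
  have hπa_eq : ∀ s ∈ Set.Icc (0:ℝ) a, πa s = s := fun s hs => by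
    simp [hπa, max_eq_left hs.1, min_eq_left hs.2]
  have hπb_eq : ∀ t ∈ Set.Icc (0:ℝ) b, πb t = t := fun t ht => by
    simp [hπb, max_eq_left ht.1, min_eq_left ht.2]
  have hπa_cont : Continuous πa := (continuous_id.max continuous_const).min continuous_const
  have hπb_cont : Continuous πb := (continuous_id.max continuous_const).min continuous_const
  -- the globally continuous extended integrand
  set F : ℝ → ℝ → E := fun s t => f (πa s) (πb t) (z (πa s) (πb t)) with hF
  have hproj_cont : Continuous fun p : ℝ × ℝ => ((πa p.1, πb p.2) : ℝ × ℝ) :=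
    (hπa_cont.comp continuous_fst).prodMk (hπb_cont.comp continuous_snd)
  have hproj_maps : ∀ p : ℝ × ℝ, (πa p.1, πb p.2) ∈ Set.Icc (0:ℝ) a ×ˢ Set.Icc (0:ℝ) b :=
    fun p => ⟨hπa_mem p.1, hπb_mem p.2⟩
  have hzc : Continuous fun p : ℝ × ℝ => z (πa p.1) (πb p.2) :=
    hz.comp_continuous hproj_cont hproj_maps
  have hFc : Continuous (Function.uncurry F) := by
    have : Continuous fun p : ℝ × ℝ =>
        ((πa p.1, πb p.2, z (πa p.1) (πb p.2)) : ℝ × ℝ × E) :=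
      (hπa_cont.comp continuous_fst).prodMk
        ((hπb_cont.comp continuous_snd).prodMk hzc)
    exact hf.comp_continuous this fun p => ⟨hπa_mem p.1, hπb_mem p.2, trivial⟩
  have hFeq : ∀ s ∈ Set.Icc (0:ℝ) a, ∀ t ∈ Set.Icc (0:ℝ) b, F s t = f s t (z s t) := by
    intro s hs t ht
    simp [hF, hπa_eq s hs, hπb_eq t ht]
  -- the integral equation in terms of F
  have hintF : ∀ x ∈ Set.Icc (0:ℝ) a, ∀ y ∈ Set.Icc (0:ℝ) b,
      z x y = ∫ s in (0:ℝ)..x, ∫ t in (0:ℝ)..y, F s t := by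
    intro x hx y hy
    rw [hint x hx y hy]
    refine intervalIntegral.integral_congr fun s hs => ?_
    rw [Set.uIcc_of_le hx.1] at hs
    have hs' : s ∈ Set.Icc 0 a := ⟨hs.1, hs.2.trans hx.2⟩
    refine intervalIntegral.integral_congr fun t htt => ?_
    rw [Set.uIcc_of_le hy.1] at htt
    have ht' : t ∈ Set.Icc 0 b := ⟨htt.1, htt.2.trans hy.2⟩
    exact (hFeq s hs' t ht').symm
  refine ⟨?_, ?_, ?_⟩
  · intro x hx
    rw [hint x hx 0 ⟨le_refl 0, hb.le⟩]
    simp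
  · intro y hy
    rw [hint 0 ⟨le_refl 0, ha.le⟩ y hy]
    simp
  · refine ⟨fun x y => ∫ t in (0:ℝ)..y, F x t, ?_, ?_⟩
    · intro x hx y hy
      have hg : Continuous fun s => ∫ t in (0:ℝ)..y, F s t :=
        intervalIntegral.continuous_parametric_intervalIntegral_of_continuous
          (μ := MeasureTheory.volume) hFc continuous_const
      have hderiv : HasDerivAt (fun x' => ∫ s in (0:ℝ)..x', ∫ t in (0:ℝ)..y, F s t)
          (∫ t in (0:ℝ)..y, F x t) x :=
        intervalIntegral.integral_hasDerivAt_right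
          (hg.intervalIntegrable 0 x) (hg.stronglyMeasurableAtFilter _ _) hg.continuousAt
      refine hderiv.congr_of_eventuallyEq ?_
      filter_upwards [Ioo_mem_nhds hx.1 hx.2] with x' hx'
      exact hintF x' ⟨hx'.1.le, hx'.2.le⟩ y ⟨hy.1.le, hy.2.le⟩
    · intro x hx y hy
      have hFx : Continuous fun t => F x t := hFc.comp (Continuous.prodMk_right x)
      have hderiv : HasDerivAt (fun y' => ∫ t in (0:ℝ)..y', F x t) (F x y) y :=
        intervalIntegral.integral_hasDerivAt_right
          (hFx.intervalIntegrable 0 y) (hFx.stronglyMeasurableAtFilter _ _) hFx.continuousAt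
      rwa [hFeq x ⟨hx.1.le, hx.2.le⟩ y ⟨hy.1.le, hy.2.le⟩] at hderiv
end
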